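/- For 0 ≤ σ₁ < σ/2 < σ₂ ≤ σ there exist ε* > 0 and constants 0 < c ≤ C such that for all r ∈ (0,ε*]: c r^{2(σ-σ₁)} ≤ -λ₁(r) ≤ C r^{2(σ-σ₁)}, c r^{2σ₁} ≤ -λ₂(r) ≤ C r^{2σ₁}, and c r^{2σ₁} ≤ λ₁(r) − λ₂(r) ≤ C r^{2σ₁}, where λ_{1,2}(r) = ½(−r^{2σ₁} − r^{2σ₂} ± √((r^{2σ₁}+r^{2σ₂})² − 4 r^{2σ})). -/

import Mathlib

open Real Set

/-- The characteristic roots `λ₁ ≥ λ₂` (for real discriminant). -/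
noncomputable def lamPlus (σ σ₁ σ₂ r : ℝ) : ℝ :=
  (-(r ^ (2*σ₁)) - r ^ (2*σ₂) + Real.sqrt ((r ^ (2*σ₁) + r ^ (2*σ₂))^2 - 4 * r ^ (2*σ))) / 2

noncomputable def lamMinus (σ σ₁ σ₂ r : ℝ) : ℝ :=
  (-(r ^ (2*σ₁)) - r ^ (2*σ₂) - Real.sqrt ((r ^ (2*σ₁) + r ^ (2*σ₂))^2 - 4 * r ^ (2*σ))) / 2

theorem stmt13 (σ σ₁ σ₂ : ℝ) (hσ : 1 ≤ σ) (hσ₁ : 0 ≤ σ₁) (h12 : σ₁ < σ / 2)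
    (h22 : σ / 2 < σ₂) (h2σ : σ₂ ≤ σ) :
    ∃ εs > 0, ∃ c > 0, ∃ C : ℝ, c ≤ C ∧ ∀ r ∈ Set.Ioc (0:ℝ) εs,
      (c * r ^ (2*(σ-σ₁)) ≤ -lamPlus σ σ₁ σ₂ r ∧ -lamPlus σ σ₁ σ₂ r ≤ C * r ^ (2*(σ-σ₁))) ∧
      (c * r ^ (2*σ₁) ≤ -lamMinus σ σ₁ σ₂ r ∧ -lamMinus σ σ₁ σ₂ r ≤ C * r ^ (2*σ₁)) ∧
      (c * r ^ (2*σ₁) ≤ lamPlus σ σ₁ σ₂ r - lamMinus σ σ₁ σ₂ r ∧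
        lamPlus σ σ₁ σ₂ r - lamMinus σ σ₁ σ₂ r ≤ C * r ^ (2*σ₁)) := by
  have ht : 0 < 2*σ - 4*σ₁ := by linarith
  set t : ℝ := 2*σ - 4*σ₁ with htdef
  refine ⟨min 1 ((1/16 : ℝ) ^ (1/t)), lt_min one_pos (Real.rpow_pos_of_pos (by norm_num) _),
    1/2, by norm_num, 2, by norm_num, ?_⟩
  rintro r ⟨hr0, hrε⟩
  have hr1 : r ≤ 1 := hrε.trans (min_le_left _ _)
  set a := r ^ (2*σ₁) with ha
  set b := r ^ (2*σ₂) with hb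
  set p := r ^ (2*σ) with hp
  set q := r ^ (2*(σ-σ₁)) with hq
  have hapos : 0 < a := Real.rpow_pos_of_pos hr0 _
  have hbpos : 0 < b := Real.rpow_pos_of_pos hr0 _
  have hppos : 0 < p := Real.rpow_pos_of_pos hr0 _
  have hqpos : 0 < q := Real.rpow_pos_of_pos hr0 _
  have hba : b ≤ a := Real.rpow_le_rpow_of_exponent_ge hr0 hr1 (by linarith)
  have hpaq : a * q = p := by
    rw [ha, hq, hp, ← Real.rpow_add hr0]; ring_nf
  have hrt : r ^ t ≤ 1/16 := by
    have h := Real.rpow_le_rpow hr0.le (hrε.trans (min_le_right _ _)) ht.le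
    rwa [← Real.rpow_mul (by norm_num), one_div_mul_cancel ht.ne', Real.rpow_one] at h
  have hpa2 : a ^ 2 * r ^ t = p := by
    rw [ha, hp, sq, ← Real.rpow_add hr0, ← Real.rpow_add hr0, htdef]; ring_nf
  have h4p : 4 * p ≤ a ^ 2 / 4 := by nlinarith [sq_nonneg a, hapos]
  have hdisc : (a/2)^2 ≤ (a+b)^2 - 4*p := by nlinarith
  set D := Real.sqrt ((a+b)^2 - 4*p) with hD
  have hD2 : D^2 = (a+b)^2 - 4*p := Real.sq_sqrt (by nlinarith)
  have hDlb : a/2 ≤ D := by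
    have h := Real.sqrt_le_sqrt hdisc
    rwa [Real.sqrt_sq (by positivity)] at h
  have hDub : D ≤ a + b := by
    have h := Real.sqrt_le_sqrt (show (a+b)^2 - 4*p ≤ (a+b)^2 by nlinarith)
    rwa [Real.sqrt_sq (by positivity)] at h
  have hLp : lamPlus σ σ₁ σ₂ r = (-a - b + D)/2 := by
    rw [lamPlus]
  have hLm : lamMinus σ σ₁ σ₂ r = (-a - b - D)/2 := by
    rw [lamMinus]
  have hprod : (a + b - D) * (a + b + D) = 4 * (a * q) := by
    have : (a + b - D) * (a + b + D) = (a+b)^2 - D^2 := by ring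
    rw [this, hD2, hpaq]; ring
  have hXnn : 0 ≤ a + b - D := by linarith
  have hS1 : a ≤ a + b + D := by linarith
  have hS2 : a + b + D ≤ 4 * a := by linarith
  rw [hLp, hLm]
  clear_value a b p q D
  clear hLp hLm hD2 hdisc h4p hpa2 hrt hpaq hppos hbpos hrε hr1 hr0 ht hσ hσ₁ h12 h22 h2σ ha hb hp hq hD htdef
  clear p r t σ σ₁ σ₂
  refine ⟨⟨?_, ?_⟩, ⟨?_, ?_⟩, ?_, ?_⟩
  · nlinarith [mul_le_mul_of_nonneg_left hS2 hXnn, hprod, hapos, hqpos]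
  · nlinarith [mul_le_mul_of_nonneg_left hS1 hXnn, hprod, hapos, hqpos]
  · linarith
  · linarith
  · linarith
  · linarith
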